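/- Fix k > 0, y ∈ ℝ³ and an index j ∈ {1,2,3}, and let u(x) := e^{ik‖x−y‖}/(4π‖x−y‖) for x ≠ y. Let v(x) := ∂ⱼu(x) be the j-th partial derivative of u. Then the function x ↦ ∇v(x)·x − i k ‖x‖ v(x) tends to 0 as ‖x‖ → ∞; in other words, the first-order derivatives of the Helmholtz Green's function satisfy the Sommerfeld radiation condition. -/

import Mathlib

/-- The free-space Helmholtz Green's function `G(x,y) = e^{ik‖x−y‖}/(4π‖x−y‖)`
with source point `y`, as a function of `x`. -/
noncomputable def helmholtzGreen (k : ℝ) (y x : EuclideanSpace ℝ (Fin 3)) : ℂ :=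
  Complex.exp (Complex.I * (k : ℂ) * (‖x - y‖ : ℂ)) / ((4 * Real.pi * ‖x - y‖ : ℝ) : ℂ)

namespace HelmAux

noncomputable section

open Complex Filter

abbrev E3 := EuclideanSpace ℝ (Fin 3)

def ed (k t : ℝ) : ℂ := Complex.exp (Complex.I * (k : ℂ) * (t : ℂ))

def phi (k t : ℝ) : ℂ := ed k t / (4 * (Real.pi : ℂ) * (t : ℂ))

def phid (k t : ℝ) : ℂ :=
  ed k t * (Complex.I * (k : ℂ) * (t : ℂ) - 1) / (4 * (Real.pi : ℂ) * (t : ℂ) ^ 2)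

def psi (k t : ℝ) : ℂ :=
  ed k t * (Complex.I * (k : ℂ) * (t : ℂ) - 1) / (4 * (Real.pi : ℂ) * (t : ℂ) ^ 3)

def psid (k t : ℝ) : ℂ :=
  (-(k : ℂ) ^ 2 * (t : ℂ) ^ 2 * ed k t - 3 * ed k t * (Complex.I * (k : ℂ) * (t : ℂ) - 1)) /
    (4 * (Real.pi : ℂ) * (t : ℂ) ^ 4)

lemma norm_ed (k t : ℝ) : ‖ed k t‖ = 1 := by
  rw [ed, Complex.norm_exp]
  simp

lemma abs_ed (k t : ℝ) : ‖ed k t‖ = 1 := norm_ed k t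

lemma helm_eq (k : ℝ) (y x : E3) : helmholtzGreen k y x = phi k ‖x - y‖ := by
  unfold helmholtzGreen phi ed
  push_cast
  ring_nf

lemma hasDerivAt_coe (t : ℝ) : HasDerivAt (fun s : ℝ => (s : ℂ)) 1 t := by
  exact Complex.ofRealCLM.hasDerivAt (x := t)

lemma hasDerivAt_ed (k t : ℝ) :
    HasDerivAt (fun s : ℝ => ed k s) (Complex.I * (k : ℂ) * ed k t) t := by
  have h := ((hasDerivAt_coe t).const_mul (Complex.I * (k : ℂ))).cexp
  simpa [ed, mul_comm] using h

lemma pi4_ne : (4 : ℂ) * (Real.pi : ℂ) ≠ 0 := by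
  simp [Real.pi_ne_zero]

lemma hasDerivAt_phi (k : ℝ) {t : ℝ} (ht : t ≠ 0) : HasDerivAt (phi k) (phid k t) t := by
  have hD : HasDerivAt (fun s : ℝ => 4 * (Real.pi : ℂ) * (s : ℂ)) (4 * (Real.pi : ℂ)) t := by
    simpa using (hasDerivAt_coe t).const_mul (4 * (Real.pi : ℂ))
  have hne : 4 * (Real.pi : ℂ) * (t : ℂ) ≠ 0 := by
    simp [Real.pi_ne_zero, ht]
  have h := (hasDerivAt_ed k t).div hD hne
  have htc : (t : ℂ) ≠ 0 := Complex.ofReal_ne_zero.mpr ht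
  have hA : (4 : ℂ) * (Real.pi : ℂ) * (t : ℂ) ^ 2 ≠ 0 := by
    simp [Real.pi_ne_zero, htc]
  have hB : ((4 : ℂ) * (Real.pi : ℂ) * (t : ℂ)) ^ 2 ≠ 0 := pow_ne_zero 2 hne
  refine h.congr_deriv ?_
  symm
  unfold phid
  rw [div_eq_div_iff hA hB]
  ring

lemma hasDerivAt_psi (k : ℝ) {t : ℝ} (ht : t ≠ 0) : HasDerivAt (psi k) (psid k t) t := by
  have htc : (t : ℂ) ≠ 0 := Complex.ofReal_ne_zero.mpr ht
  have h2 : HasDerivAt (fun s : ℝ => Complex.I * (k : ℂ) * (s : ℂ) - 1) (Complex.I * (k : ℂ)) t := by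
    simpa using ((hasDerivAt_coe t).const_mul (Complex.I * (k : ℂ))).sub_const 1
  have hN : HasDerivAt (fun s : ℝ => ed k s * (Complex.I * (k : ℂ) * (s : ℂ) - 1))
      (-(k : ℂ) ^ 2 * (t : ℂ) * ed k t) t := by
    have h := (hasDerivAt_ed k t).mul h2
    refine h.congr_deriv ?_
    symm
    linear_combination (-(k : ℂ) ^ 2 * (t : ℂ) * ed k t) * Complex.I_sq
  have hcoe := hasDerivAt_coe t
  have hcube : HasDerivAt (fun s : ℝ => ((s : ℂ)) ^ 3) (3 * (t : ℂ) ^ 2) t := by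
    have hfe : (fun s : ℝ => ((s : ℂ)) ^ 3) = fun s : ℝ => ((s : ℂ) * (s : ℂ)) * (s : ℂ) :=
      funext fun s => by ring
    rw [hfe]
    have := (hcoe.mul hcoe).mul hcoe
    refine this.congr_deriv ?_
    symm
    simp only [Pi.mul_apply]
    ring
  have hD : HasDerivAt (fun s : ℝ => 4 * (Real.pi : ℂ) * (s : ℂ) ^ 3)
      (4 * (Real.pi : ℂ) * (3 * (t : ℂ) ^ 2)) t := hcube.const_mul _
  have hne : 4 * (Real.pi : ℂ) * (t : ℂ) ^ 3 ≠ 0 := by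
    simp [Real.pi_ne_zero, htc]
  have hA : (4 : ℂ) * (Real.pi : ℂ) * (t : ℂ) ^ 4 ≠ 0 := by
    simp [Real.pi_ne_zero, htc]
  have hB : ((4 : ℂ) * (Real.pi : ℂ) * (t : ℂ) ^ 3) ^ 2 ≠ 0 := pow_ne_zero 2 hne
  have h := hN.div hD hne
  refine h.congr_deriv ?_
  symm
  unfold psid
  rw [div_eq_div_iff hA hB]
  ring

lemma hasFDerivAt_norm3 {x : E3} (hx : x ≠ 0) :
    HasFDerivAt (fun z : E3 => ‖z‖) (‖x‖⁻¹ • innerSL ℝ x) x := by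
  have h0 : (0 : ℝ) < ‖x‖ := norm_pos_iff.2 hx
  have hsq := (hasStrictFDerivAt_norm_sq x).hasFDerivAt
  have hs : HasDerivAt Real.sqrt (1 / (2 * Real.sqrt (‖x‖ ^ 2))) (‖x‖ ^ 2) :=
    Real.hasDerivAt_sqrt (by positivity)
  have h := hs.comp_hasFDerivAt x hsq
  have hfun : (Real.sqrt ∘ fun z : E3 => ‖z‖ ^ 2) = fun z : E3 => ‖z‖ :=
    funext fun z => by simp [Function.comp, Real.sqrt_sq (norm_nonneg z)]
  rw [hfun] at h
  refine h.congr_fderiv ?_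
  symm
  ext v
  simp [Real.sqrt_sq h0.le, ContinuousLinearMap.smul_apply]
  field_simp

lemma hasFDerivAt_r (y : E3) {x : E3} (h : x ≠ y) :
    HasFDerivAt (fun z : E3 => ‖z - y‖) (‖x - y‖⁻¹ • innerSL ℝ (x - y)) x := by
  have hsub : HasFDerivAt (fun z : E3 => z - y) (ContinuousLinearMap.id ℝ E3) x :=
    (hasFDerivAt_id x).sub_const y
  have := (hasFDerivAt_norm3 (sub_ne_zero.2 h)).comp x hsub
  simpa [Function.comp_def] using this

lemma hasFDerivAt_green (k : ℝ) (y : E3) {x : E3} (h : x ≠ y) :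
    HasFDerivAt (helmholtzGreen k y)
      ((ContinuousLinearMap.smulRight (1 : ℝ →L[ℝ] ℝ) (phid k ‖x - y‖)).comp
        (‖x - y‖⁻¹ • innerSL ℝ (x - y))) x := by
  have ht : ‖x - y‖ ≠ 0 := norm_ne_zero_iff.2 (sub_ne_zero.2 h)
  have hr := hasFDerivAt_r y h
  have hphi := (hasDerivAt_phi k ht).hasFDerivAt
  have hcomp := hphi.comp x hr
  have hfe : (phi k ∘ fun z : E3 => ‖z - y‖) = helmholtzGreen k y :=
    funext fun z => (helm_eq k y z).symm
  rw [← hfe]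
  exact hcomp

lemma fderiv_green_apply (k : ℝ) (y : E3) {x : E3} (h : x ≠ y) (i : Fin 3) :
    fderiv ℝ (helmholtzGreen k y) x (EuclideanSpace.single i 1)
      = psi k ‖x - y‖ * (((x - y) i : ℝ) : ℂ) := by
  have ht : ‖x - y‖ ≠ 0 := norm_ne_zero_iff.2 (sub_ne_zero.2 h)
  have htc : ((‖x - y‖ : ℝ) : ℂ) ≠ 0 := Complex.ofReal_ne_zero.mpr ht
  have hpi : ((Real.pi : ℝ) : ℂ) ≠ 0 := Complex.ofReal_ne_zero.mpr Real.pi_ne_zero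
  rw [(hasFDerivAt_green k y h).fderiv]
  simp only [ContinuousLinearMap.coe_comp', Function.comp_apply,
    ContinuousLinearMap.smul_apply, innerSL_apply_apply, ContinuousLinearMap.smulRight_apply,
    ContinuousLinearMap.one_apply, EuclideanSpace.inner_single_right, conj_trivial, one_mul,
    smul_eq_mul, Complex.real_smul]
  push_cast
  unfold psi phid
  field_simp

def vfun (k : ℝ) (y : E3) (j : Fin 3) (z : E3) : ℂ := psi k ‖z - y‖ * (((z - y) j : ℝ) : ℂ)

lemma hasFDerivAt_coord (y : E3) (j : Fin 3) (x : E3) :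
    HasFDerivAt (fun z : E3 => (((z - y) j : ℝ) : ℂ))
      (Complex.ofRealCLM.comp (EuclideanSpace.proj j)) x := by
  have hsub : HasFDerivAt (fun z : E3 => z - y) (ContinuousLinearMap.id ℝ E3) x :=
    (hasFDerivAt_id x).sub_const y
  have h2 := (Complex.ofRealCLM.comp (EuclideanSpace.proj j)).hasFDerivAt.comp x hsub
  rw [ContinuousLinearMap.comp_id] at h2
  exact h2

lemma hasFDerivAt_vfun (k : ℝ) (y : E3) (j : Fin 3) {x : E3} (h : x ≠ y) :
    HasFDerivAt (vfun k y j)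
      (psi k ‖x - y‖ • (Complex.ofRealCLM.comp (EuclideanSpace.proj j)) +
        (((x - y) j : ℝ) : ℂ) •
          ((ContinuousLinearMap.smulRight (1 : ℝ →L[ℝ] ℝ) (psid k ‖x - y‖)).comp
            (‖x - y‖⁻¹ • innerSL ℝ (x - y)))) x := by
  have ht : ‖x - y‖ ≠ 0 := norm_ne_zero_iff.2 (sub_ne_zero.2 h)
  have h1 : HasFDerivAt (fun z : E3 => psi k ‖z - y‖)
      ((ContinuousLinearMap.smulRight (1 : ℝ →L[ℝ] ℝ) (psid k ‖x - y‖)).comp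
        (‖x - y‖⁻¹ • innerSL ℝ (x - y))) x :=
    by have h1' := (hasDerivAt_psi k ht).hasFDerivAt.comp x (hasFDerivAt_r y h)
       exact h1'
  exact h1.mul (hasFDerivAt_coord y j x)

lemma fderiv2_apply (k : ℝ) (y : E3) (j l : Fin 3) {x : E3} (h : x ≠ y) :
    fderiv ℝ (fun z => fderiv ℝ (helmholtzGreen k y) z (EuclideanSpace.single j 1)) x
        (EuclideanSpace.single l 1)
      = psi k ‖x - y‖ * (((EuclideanSpace.single l 1 : E3) j : ℝ) : ℂ)
        + (((x - y) j : ℝ) : ℂ) * ((‖x - y‖⁻¹ * ((x - y) l) : ℝ) : ℂ) * psid k ‖x - y‖ := by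
  have hev : (fun z => fderiv ℝ (helmholtzGreen k y) z (EuclideanSpace.single j 1))
      =ᶠ[nhds x] vfun k y j := by
    filter_upwards [isOpen_ne.mem_nhds h] with z hz
    exact fderiv_green_apply k y hz j
  rw [hev.fderiv_eq, (hasFDerivAt_vfun k y j h).fderiv]
  simp only [ContinuousLinearMap.add_apply, ContinuousLinearMap.coe_smul',
    ContinuousLinearMap.coe_comp', Function.comp_apply, Pi.smul_apply,
    ContinuousLinearMap.smul_apply, innerSL_apply_apply, ContinuousLinearMap.smulRight_apply,
    ContinuousLinearMap.one_apply, EuclideanSpace.inner_single_right, conj_trivial, one_mul,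
    smul_eq_mul, Complex.real_smul, Complex.ofRealCLM_apply]
  push_cast
  ring_nf
  simp [PiLp.proj_apply]


lemma key_id (k : ℝ) {t : ℝ} (ht : t ≠ 0) :
    (t : ℂ) * psid k t + psi k t - Complex.I * (k : ℂ) * (t : ℂ) * psi k t
      = ed k t * (2 - Complex.I * (k : ℂ) * (t : ℂ)) / (4 * (Real.pi : ℂ) * (t : ℂ) ^ 3) := by
  have htc : (t : ℂ) ≠ 0 := Complex.ofReal_ne_zero.mpr ht
  have hpi : ((Real.pi : ℝ) : ℂ) ≠ 0 := Complex.ofReal_ne_zero.mpr Real.pi_ne_zero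
  unfold psi psid
  field_simp
  ring_nf
  simp only [Complex.I_sq]
  field_simp
  ring

lemma hinner_sum (y x : E3) :
    ((inner ℝ (x - y) x : ℝ) : ℝ) = ∑ l : Fin 3, (x - y) l * x l := by
  rw [PiLp.inner_apply]
  refine Finset.sum_congr rfl fun l _ => ?_
  simp [RCLike.inner_apply, mul_comm]

lemma sum_eq (k : ℝ) (y : E3) (j : Fin 3) {x : E3} (h : x ≠ y) :
    (∑ l : Fin 3,
        fderiv ℝ (fun z => fderiv ℝ (helmholtzGreen k y) z (EuclideanSpace.single j 1)) x
          (EuclideanSpace.single l 1) * ((x l : ℝ) : ℂ))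
      = psi k ‖x - y‖ * ((x j : ℝ) : ℂ)
        + (((x - y) j : ℝ) : ℂ) * ((‖x - y‖⁻¹ : ℝ) : ℂ)
            * (((inner ℝ (x - y) x : ℝ) : ℝ) : ℂ) * psid k ‖x - y‖ := by
  rw [Finset.sum_congr rfl (fun l (_ : l ∈ Finset.univ) => by rw [fderiv2_apply k y j l h])]
  simp only [add_mul, Finset.sum_add_distrib]
  congr 1
  · simp [EuclideanSpace.single_apply, apply_ite, ite_mul, mul_ite, Finset.sum_ite_eq,
      Finset.mem_univ]
  · rw [hinner_sum y x]
    push_cast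
    rw [Finset.mul_sum, Finset.sum_mul]
    exact Finset.sum_congr rfl fun l _ => by push_cast; ring

lemma coord_le (w : E3) (i : Fin 3) : |w i| ≤ ‖w‖ := by
  have h := abs_real_inner_le_norm w (EuclideanSpace.single i (1 : ℝ))
  have h2 : (inner ℝ w (EuclideanSpace.single i (1 : ℝ)) : ℝ) = w i := by
    rw [EuclideanSpace.inner_single_right]
    simp
  rw [h2] at h
  simpa using h

lemma norm_psi_le (k : ℝ) (hk : 0 < k) {t : ℝ} (ht : 1 ≤ t) :
    ‖psi k t‖ ≤ (k + 1) / t ^ 2 := by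
  have ht0 : (0 : ℝ) < t := lt_of_lt_of_le one_pos ht
  have hnum : ‖ed k t * (Complex.I * (k : ℂ) * (t : ℂ) - 1)‖ ≤ k * t + 1 := by
    rw [norm_mul, norm_ed, one_mul]
    calc ‖Complex.I * (k : ℂ) * (t : ℂ) - 1‖ ≤ ‖Complex.I * (k : ℂ) * (t : ℂ)‖ + ‖(1 : ℂ)‖ :=
          norm_sub_le _ _
      _ = k * t + 1 := by
          simp [norm_mul, Complex.norm_real, Real.norm_eq_abs,
            abs_of_pos hk, abs_of_pos ht0]
  have hden : ‖(4 * (Real.pi : ℂ) * (t : ℂ) ^ 3)‖ = 4 * Real.pi * t ^ 3 := by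
    simp [norm_mul, norm_pow, Complex.norm_real, Real.norm_eq_abs,
      abs_of_pos Real.pi_pos, abs_of_pos ht0]
  rw [psi, norm_div, hden]
  have hd3 : t ^ 3 ≤ 4 * Real.pi * t ^ 3 := by
    nlinarith [Real.pi_gt_three, pow_pos ht0 3]
  have ht23 : t ^ 2 ≤ t ^ 3 := by nlinarith [mul_le_mul_of_nonneg_left ht (sq_nonneg t)]
  calc ‖ed k t * (Complex.I * (k : ℂ) * (t : ℂ) - 1)‖ / (4 * Real.pi * t ^ 3)
      ≤ (k * t + 1) / t ^ 3 := div_le_div₀ (by positivity) hnum (by positivity) hd3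
    _ ≤ (k + 1) / t ^ 2 := by
        rw [div_le_div_iff₀ (by positivity) (by positivity)]
        nlinarith [mul_le_mul_of_nonneg_left ht23 hk.le]

lemma norm_psid_le (k : ℝ) (hk : 0 < k) {t : ℝ} (ht : 1 ≤ t) :
    ‖psid k t‖ ≤ (k ^ 2 + 3 * k + 3) / t ^ 2 := by
  have ht0 : (0 : ℝ) < t := lt_of_lt_of_le one_pos ht
  have hnum : ‖-(k : ℂ) ^ 2 * (t : ℂ) ^ 2 * ed k t - 3 * ed k t * (Complex.I * (k : ℂ) * (t : ℂ) - 1)‖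
      ≤ k ^ 2 * t ^ 2 + 3 * (k * t + 1) := by
    calc ‖-(k : ℂ) ^ 2 * (t : ℂ) ^ 2 * ed k t - 3 * ed k t * (Complex.I * (k : ℂ) * (t : ℂ) - 1)‖
        ≤ ‖-(k : ℂ) ^ 2 * (t : ℂ) ^ 2 * ed k t‖ + ‖3 * ed k t * (Complex.I * (k : ℂ) * (t : ℂ) - 1)‖ :=
          norm_sub_le _ _
      _ ≤ k ^ 2 * t ^ 2 + 3 * (k * t + 1) := by
          have h1 : ‖-(k : ℂ) ^ 2 * (t : ℂ) ^ 2 * ed k t‖ = k ^ 2 * t ^ 2 := by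
            simp [norm_mul, norm_pow, Complex.norm_real, Real.norm_eq_abs, abs_ed,
              abs_of_pos hk, abs_of_pos ht0]
          have h2 : ‖3 * ed k t * (Complex.I * (k : ℂ) * (t : ℂ) - 1)‖ ≤ 3 * (k * t + 1) := by
            rw [norm_mul, norm_mul, norm_ed, mul_one]
            have h3 : ‖Complex.I * (k : ℂ) * (t : ℂ) - 1‖ ≤ k * t + 1 := by
              calc ‖Complex.I * (k : ℂ) * (t : ℂ) - 1‖
                  ≤ ‖Complex.I * (k : ℂ) * (t : ℂ)‖ + ‖(1 : ℂ)‖ := norm_sub_le _ _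
                _ = k * t + 1 := by
                    simp [norm_mul, Complex.norm_real, Real.norm_eq_abs,
                      abs_of_pos hk, abs_of_pos ht0]
            have h4 : ‖(3 : ℂ)‖ = 3 := by norm_num
            rw [h4]
            nlinarith [norm_nonneg (Complex.I * (k : ℂ) * (t : ℂ) - 1)]
          linarith
  have hden : ‖(4 * (Real.pi : ℂ) * (t : ℂ) ^ 4)‖ = 4 * Real.pi * t ^ 4 := by
    simp [norm_mul, norm_pow, Complex.norm_real, Real.norm_eq_abs,
      abs_of_pos Real.pi_pos, abs_of_pos ht0]
  have hd4 : t ^ 4 ≤ 4 * Real.pi * t ^ 4 := by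
    nlinarith [Real.pi_gt_three, pow_pos ht0 4]
  rw [psid, norm_div, hden]
  have ht34 : t ^ 3 ≤ t ^ 4 := by nlinarith [mul_le_mul_of_nonneg_left ht (pow_pos ht0 3).le]
  have ht24 : t ^ 2 ≤ t ^ 4 := by nlinarith [pow_pos ht0 2, sq_nonneg (t ^ 2 - t)]
  calc ‖-(k : ℂ) ^ 2 * (t : ℂ) ^ 2 * ed k t - 3 * ed k t * (Complex.I * (k : ℂ) * (t : ℂ) - 1)‖ /
        (4 * Real.pi * t ^ 4)
      ≤ (k ^ 2 * t ^ 2 + 3 * (k * t + 1)) / t ^ 4 := div_le_div₀ (by positivity) hnum (by positivity) hd4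
    _ ≤ (k ^ 2 + 3 * k + 3) / t ^ 2 := by
        rw [div_le_div_iff₀ (by positivity) (by positivity)]
        nlinarith [mul_le_mul_of_nonneg_left ht34 (by positivity : (0:ℝ) ≤ 3 * k),
          mul_le_mul_of_nonneg_left ht24 (by norm_num : (0:ℝ) ≤ 3)]

lemma norm_key_le (k : ℝ) (hk : 0 < k) {t : ℝ} (ht : 1 ≤ t) :
    ‖ed k t * (2 - Complex.I * (k : ℂ) * (t : ℂ)) / (4 * (Real.pi : ℂ) * (t : ℂ) ^ 3)‖
      ≤ (k + 2) / t ^ 2 := by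
  have ht0 : (0 : ℝ) < t := lt_of_lt_of_le one_pos ht
  have hnum : ‖ed k t * (2 - Complex.I * (k : ℂ) * (t : ℂ))‖ ≤ 2 + k * t := by
    rw [norm_mul, norm_ed, one_mul]
    calc ‖(2 : ℂ) - Complex.I * (k : ℂ) * (t : ℂ)‖
        ≤ ‖(2 : ℂ)‖ + ‖Complex.I * (k : ℂ) * (t : ℂ)‖ := norm_sub_le _ _
      _ = 2 + k * t := by
          simp [norm_mul, Complex.norm_real, Real.norm_eq_abs, abs_of_pos hk, abs_of_pos ht0]
  have hden : ‖(4 * (Real.pi : ℂ) * (t : ℂ) ^ 3)‖ = 4 * Real.pi * t ^ 3 := by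
    simp [norm_mul, norm_pow, Complex.norm_real, Real.norm_eq_abs,
      abs_of_pos Real.pi_pos, abs_of_pos ht0]
  have hd3 : t ^ 3 ≤ 4 * Real.pi * t ^ 3 := by
    nlinarith [Real.pi_gt_three, pow_pos ht0 3]
  have ht23 : t ^ 2 ≤ t ^ 3 := by nlinarith [mul_le_mul_of_nonneg_left ht (sq_nonneg t)]
  rw [norm_div, hden]
  calc ‖ed k t * (2 - Complex.I * (k : ℂ) * (t : ℂ))‖ / (4 * Real.pi * t ^ 3)
      ≤ (2 + k * t) / t ^ 3 := div_le_div₀ (by positivity) hnum (by positivity) hd3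
    _ ≤ (k + 2) / t ^ 2 := by
        rw [div_le_div_iff₀ (by positivity) (by positivity)]
        nlinarith [mul_le_mul_of_nonneg_left ht23 hk.le]
end

end HelmAux

theorem helmholtzGreen_deriv_sommerfeld (k : ℝ) (hk : 0 < k)
    (y : EuclideanSpace ℝ (Fin 3)) (j : Fin 3) :
    Filter.Tendsto
      (fun x : EuclideanSpace ℝ (Fin 3) =>
        (∑ l : Fin 3,
          fderiv ℝ (fun z => fderiv ℝ (helmholtzGreen k y) z (EuclideanSpace.single j 1)) x
              (EuclideanSpace.single l 1) * ((x l : ℝ) : ℂ))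
          - Complex.I * (k : ℂ) * (‖x‖ : ℂ)
              * fderiv ℝ (helmholtzGreen k y) x (EuclideanSpace.single j 1))
      (Filter.comap norm Filter.atTop) (nhds 0) := by
  classical
  open HelmAux Filter Complex in
  set C : ℝ := (k + 2) + (k ^ 2 + 3 * k + 3) * ‖y‖ + (k + 1) * ‖y‖ + k * ((k + 1) * ‖y‖) with hC
  have hC0 : 0 ≤ C := by positivity
  have hev : ∀ᶠ x : EuclideanSpace ℝ (Fin 3) in Filter.comap norm Filter.atTop,
      ‖y‖ + 1 ≤ ‖x‖ := (Filter.eventually_ge_atTop (‖y‖ + 1)).comap norm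
  refine squeeze_zero_norm' (a := fun x : EuclideanSpace ℝ (Fin 3) => C / (‖x‖ - ‖y‖)) ?_ ?_
  · filter_upwards [hev] with x hx
    have hxy : x ≠ y := by
      rintro rfl; linarith
    have hρlb : ‖x‖ - ‖y‖ ≤ ‖x - y‖ := norm_sub_norm_le x y
    have hρ1 : (1 : ℝ) ≤ ‖x - y‖ := le_trans (by linarith) hρlb
    have hρ0 : (0 : ℝ) < ‖x - y‖ := lt_of_lt_of_le one_pos hρ1
    rw [HelmAux.sum_eq k y j hxy, HelmAux.fderiv_green_apply k y hxy j]
    set w : EuclideanSpace ℝ (Fin 3) := x - y with hw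
    set ρ : ℝ := ‖w‖ with hρdef
    have hS : ((inner ℝ w x : ℝ)) = ρ ^ 2 + (inner ℝ w y : ℝ) := by
      have hx' : x = w + y := by rw [hw]; abel
      calc (inner ℝ w x : ℝ) = (inner ℝ w (w + y) : ℝ) := by rw [← hx']
        _ = (inner ℝ w w : ℝ) + (inner ℝ w y : ℝ) := inner_add_right _ _ _
        _ = ρ ^ 2 + (inner ℝ w y : ℝ) := by rw [real_inner_self_eq_norm_sq]
    have hxj : (x j : ℝ) = w j + y j := by
      rw [hw]; show (x j : ℝ) = (x j - y j) + y j; ring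
    have hkey := HelmAux.key_id k hρ0.ne'
    have hρinv : ((ρ : ℝ) : ℂ)⁻¹ * ((ρ : ℝ) : ℂ) ^ 2 = (ρ : ℂ) := by
      have : ((ρ : ℝ) : ℂ) ≠ 0 := Complex.ofReal_ne_zero.mpr hρ0.ne'
      field_simp
    have hA : HelmAux.psi k ρ * ((x j : ℝ) : ℂ)
          + ((w j : ℝ) : ℂ) * ((ρ⁻¹ : ℝ) : ℂ) * (((inner ℝ w x : ℝ) : ℝ) : ℂ) * HelmAux.psid k ρ
          - Complex.I * (k : ℂ) * (‖x‖ : ℂ) * (HelmAux.psi k ρ * ((w j : ℝ) : ℂ))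
        = HelmAux.ed k ρ * (2 - Complex.I * (k : ℂ) * (ρ : ℂ)) / (4 * (Real.pi : ℂ) * (ρ : ℂ) ^ 3)
              * ((w j : ℝ) : ℂ)
          + ((w j : ℝ) : ℂ) * ((ρ⁻¹ : ℝ) : ℂ) * (((inner ℝ w y : ℝ) : ℝ) : ℂ) * HelmAux.psid k ρ
          + HelmAux.psi k ρ * ((y j : ℝ) : ℂ)
          - Complex.I * (k : ℂ) * ((‖x‖ - ρ : ℝ) : ℂ) * (HelmAux.psi k ρ * ((w j : ℝ) : ℂ)) := by
      rw [hS, hxj]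
      push_cast
      linear_combination ((w j : ℝ) : ℂ) * hkey
        + ((w j : ℝ) : ℂ) * HelmAux.psid k ρ * hρinv
    rw [hA]
    -- numeric bounds
    have hw_le : |w j| ≤ ρ := HelmAux.coord_le w j
    have hyj : |y j| ≤ ‖y‖ := HelmAux.coord_le y j
    have hwy : |(inner ℝ w y : ℝ)| ≤ ρ * ‖y‖ := abs_real_inner_le_norm w y
    have hdxy : |‖x‖ - ρ| ≤ ‖y‖ := by
      have h1 := abs_norm_sub_norm_le x w
      have h2 : x - w = y := by rw [hw]; abel
      rwa [h2] at h1
    have hpsi := HelmAux.norm_psi_le k hk hρ1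
    have hpsid := HelmAux.norm_psid_le k hk hρ1
    have hkeyn := HelmAux.norm_key_le k hk hρ1
    have hρ2 : ρ ≤ ρ ^ 2 := by nlinarith
    have hT1 : ‖HelmAux.ed k ρ * (2 - Complex.I * (k : ℂ) * (ρ : ℂ))
          / (4 * (Real.pi : ℂ) * (ρ : ℂ) ^ 3) * ((w j : ℝ) : ℂ)‖ ≤ (k + 2) / ρ := by
      rw [norm_mul, Complex.norm_real, Real.norm_eq_abs]
      calc ‖HelmAux.ed k ρ * (2 - Complex.I * (k : ℂ) * (ρ : ℂ))
            / (4 * (Real.pi : ℂ) * (ρ : ℂ) ^ 3)‖ * |w j|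
          ≤ ((k + 2) / ρ ^ 2) * ρ :=
            mul_le_mul hkeyn hw_le (abs_nonneg _) (by positivity)
        _ = (k + 2) / ρ := by field_simp
    have hT2 : ‖((w j : ℝ) : ℂ) * ((ρ⁻¹ : ℝ) : ℂ) * (((inner ℝ w y : ℝ) : ℝ) : ℂ)
          * HelmAux.psid k ρ‖ ≤ (k ^ 2 + 3 * k + 3) * ‖y‖ / ρ := by
      rw [norm_mul, norm_mul, norm_mul, Complex.norm_real, Complex.norm_real,
        Complex.norm_real, Real.norm_eq_abs, Real.norm_eq_abs, Real.norm_eq_abs,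
        abs_inv, abs_of_pos hρ0]
      calc |w j| * ρ⁻¹ * |(inner ℝ w y : ℝ)| * ‖HelmAux.psid k ρ‖
          ≤ ρ * ρ⁻¹ * (ρ * ‖y‖) * ((k ^ 2 + 3 * k + 3) / ρ ^ 2) := by
            gcongr
        _ = (k ^ 2 + 3 * k + 3) * ‖y‖ / ρ := by field_simp
    have hT3 : ‖HelmAux.psi k ρ * ((y j : ℝ) : ℂ)‖ ≤ (k + 1) * ‖y‖ / ρ := by
      rw [norm_mul, Complex.norm_real, Real.norm_eq_abs]
      calc ‖HelmAux.psi k ρ‖ * |y j| ≤ ((k + 1) / ρ ^ 2) * ‖y‖ :=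
            mul_le_mul hpsi hyj (abs_nonneg _) (by positivity)
        _ ≤ ((k + 1) / ρ) * ‖y‖ := by gcongr
        _ = (k + 1) * ‖y‖ / ρ := by ring
    have hT4 : ‖Complex.I * (k : ℂ) * ((‖x‖ - ρ : ℝ) : ℂ)
          * (HelmAux.psi k ρ * ((w j : ℝ) : ℂ))‖ ≤ k * ((k + 1) * ‖y‖) / ρ := by
      rw [norm_mul, norm_mul, norm_mul, norm_mul, Complex.norm_I, one_mul,
        Complex.norm_real, Complex.norm_real, Complex.norm_real,
        Real.norm_eq_abs, Real.norm_eq_abs, Real.norm_eq_abs, abs_of_pos hk]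
      calc k * |‖x‖ - ρ| * (‖HelmAux.psi k ρ‖ * |w j|)
          ≤ k * ‖y‖ * (((k + 1) / ρ ^ 2) * ρ) := by gcongr
        _ = k * ((k + 1) * ‖y‖) / ρ := by field_simp
    calc ‖HelmAux.ed k ρ * (2 - Complex.I * (k : ℂ) * (ρ : ℂ)) / (4 * (Real.pi : ℂ) * (ρ : ℂ) ^ 3)
              * ((w j : ℝ) : ℂ)
          + ((w j : ℝ) : ℂ) * ((ρ⁻¹ : ℝ) : ℂ) * (((inner ℝ w y : ℝ) : ℝ) : ℂ) * HelmAux.psid k ρ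
          + HelmAux.psi k ρ * ((y j : ℝ) : ℂ)
          - Complex.I * (k : ℂ) * ((‖x‖ - ρ : ℝ) : ℂ) * (HelmAux.psi k ρ * ((w j : ℝ) : ℂ))‖
        ≤ ‖HelmAux.ed k ρ * (2 - Complex.I * (k : ℂ) * (ρ : ℂ)) / (4 * (Real.pi : ℂ) * (ρ : ℂ) ^ 3)
              * ((w j : ℝ) : ℂ)‖
          + ‖((w j : ℝ) : ℂ) * ((ρ⁻¹ : ℝ) : ℂ) * (((inner ℝ w y : ℝ) : ℝ) : ℂ) * HelmAux.psid k ρ‖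
          + ‖HelmAux.psi k ρ * ((y j : ℝ) : ℂ)‖
          + ‖Complex.I * (k : ℂ) * ((‖x‖ - ρ : ℝ) : ℂ) * (HelmAux.psi k ρ * ((w j : ℝ) : ℂ))‖ := by
          apply (norm_sub_le _ _).trans
          gcongr
          exact (norm_add_le _ _).trans (by gcongr; exact norm_add_le _ _)
      _ ≤ (k + 2) / ρ + (k ^ 2 + 3 * k + 3) * ‖y‖ / ρ + (k + 1) * ‖y‖ / ρ
            + k * ((k + 1) * ‖y‖) / ρ := by
          exact add_le_add (add_le_add (add_le_add hT1 hT2) hT3) hT4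
      _ = C / ρ := by rw [hC]; ring
      _ ≤ C / (‖x‖ - ‖y‖) := by
          apply div_le_div_of_nonneg_left hC0 (by linarith) hρlb
  · have h1 : Filter.Tendsto (fun x : EuclideanSpace ℝ (Fin 3) => ‖x‖)
        (Filter.comap norm Filter.atTop) Filter.atTop := Filter.tendsto_comap
    have h2 : Filter.Tendsto (fun t : ℝ => C / (t - ‖y‖)) Filter.atTop (nhds 0) := by
      apply Filter.Tendsto.div_atTop tendsto_const_nhds
      simpa [sub_eq_add_neg] using
        Filter.tendsto_atTop_add_const_right Filter.atTop (-‖y‖) Filter.tendsto_id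
    exact h2.comp h1
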